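/- Let α ∈ (0,1) and n = 1. The fractional gradient of the indicator of an interval is given explicitly by ∇^α χ_{(x−r, x+r)}(y) = (μ_{1,α}/α)(|y − x + r|^{−α} − |y − x − r|^{−α}) for a.e. y ∈ ℝ, where μ_{1,α} = 2^α π^{−1/2} Γ(1 + α/2)/Γ((1−α)/2). Consequently, ∇^α χ_{(x−r, x+r)} belongs to L^{1/α,∞}(ℝ) but not to L^{1/α,s}(ℝ) for any s ∈ [1,∞). -/

import Mathlib

open MeasureTheory Metric Set Filter
open scoped ENNReal NNReal Topology

/-- The normalizing constant `μ_{1,α} = 2^α π^{-1/2} Γ((2+α)/2)/Γ((1-α)/2)`. -/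
noncomputable def mu1 (α : ℝ) : ℝ :=
  2 ^ α * Real.pi ^ (-(1 : ℝ) / 2) * Real.Gamma ((2 + α) / 2) / Real.Gamma ((1 - α) / 2)

/-- The one-dimensional fractional `α`-gradient. -/
noncomputable def fracGrad1 (α : ℝ) (f : ℝ → ℝ) (y : ℝ) : ℝ :=
  mu1 α * ∫ z : ℝ, (z - y) * (f z - f y) / |z - y| ^ (2 + α)


lemma div_abs_rpow {α : ℝ} (hα : 0 < α) {u : ℝ} (hu : 0 < u) :
    u / |u| ^ ((2:ℝ) + α) = u ^ (-(1 + α)) := by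
  rw [abs_of_pos hu, show (2:ℝ) + α = 1 + (1 + α) by ring, Real.rpow_add hu,
    Real.rpow_one, Real.rpow_neg hu.le]
  have h1 : u ^ ((1:ℝ) + α) ≠ 0 := by positivity
  field_simp

lemma key_Ioo {α : ℝ} (hα : 0 < α) {p q : ℝ} (hp : 0 < p) (hpq : p ≤ q) :
    ∫ u in Ioo p q, u ^ (-(1 + α)) = (p ^ (-α) - q ^ (-α)) / α := by
  rw [← integral_Ioc_eq_integral_Ioo, ← intervalIntegral.integral_of_le hpq,
    integral_rpow (Or.inr ⟨by intro h; rw [neg_eq_iff_eq_neg] at h; linarith, by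
      rw [Set.uIcc_of_le hpq]; intro h; exact absurd h.1 (by linarith)⟩)]
  have h2 : -(1 + α) + 1 = -α := by ring
  rw [h2, div_neg, ← neg_div, neg_sub]

lemma key_Ioi {α : ℝ} (hα : 0 < α) {p : ℝ} (hp : 0 < p) :
    ∫ u in Ioi p, u ^ (-(1 + α)) = p ^ (-α) / α := by
  rw [integral_Ioi_rpow_of_lt (by linarith) hp]
  have h2 : -(1 + α) + 1 = -α := by ring
  rw [h2]
  field_simp


lemma sub_Iio (f : ℝ → ℝ) (y a : ℝ) :
    ∫ z in Iio a, f (y - z) = ∫ u in Ioi (y - a), f u := by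
  rw [show Iio a = (fun z : ℝ => y - z) ⁻¹' (Ioi (y - a)) by
    ext z; simp [sub_lt_sub_iff_left]]
  exact (Measure.measurePreserving_sub_left volume y).setIntegral_preimage_emb
    (MeasurableEquiv.subLeft y).measurableEmbedding f _

lemma sub_Ioi (f : ℝ → ℝ) (y b : ℝ) :
    ∫ z in Ioi b, f (z - y) = ∫ u in Ioi (b - y), f u := by
  rw [show Ioi b = (fun z : ℝ => z - y) ⁻¹' (Ioi (b - y)) by
    ext z; simp [sub_lt_sub_iff_right]]
  exact (measurePreserving_sub_right volume y).setIntegral_preimage_emb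
    (MeasurableEquiv.subRight y).measurableEmbedding f _

lemma sub_Ioo (f : ℝ → ℝ) (y a b : ℝ) :
    ∫ z in Ioo a b, f (z - y) = ∫ u in Ioo (a - y) (b - y), f u := by
  rw [show Ioo a b = (fun z : ℝ => z - y) ⁻¹' (Ioo (a - y) (b - y)) by
    ext z; simp [sub_lt_sub_iff_right]]
  exact (measurePreserving_sub_right volume y).setIntegral_preimage_emb
    (MeasurableEquiv.subRight y).measurableEmbedding f _

lemma sub_Ioo' (f : ℝ → ℝ) (y a b : ℝ) :
    ∫ z in Ioo a b, f (y - z) = ∫ u in Ioo (y - b) (y - a), f u := by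
  rw [show Ioo a b = (fun z : ℝ => y - z) ⁻¹' (Ioo (y - b) (y - a)) by
    ext z
    simp only [mem_Ioo, mem_preimage]
    constructor
    · rintro ⟨h1, h2⟩; exact ⟨by linarith, by linarith⟩
    · rintro ⟨h1, h2⟩; exact ⟨by linarith, by linarith⟩]
  exact (Measure.measurePreserving_sub_left volume y).setIntegral_preimage_emb
    (MeasurableEquiv.subLeft y).measurableEmbedding f _

lemma intOn_Iio {α : ℝ} (hα : 0 < α) {y a : ℝ} (h : a < y) :
    IntegrableOn (fun z : ℝ => (y - z) ^ (-(1 + α))) (Iio a) := by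
  have base : IntegrableOn (fun u : ℝ => u ^ (-(1 + α))) (Ioi (y - a)) :=
    integrableOn_Ioi_rpow_of_lt (by linarith) (by linarith)
  have hpre : Iio a = (fun z : ℝ => y - z) ⁻¹' (Ioi (y - a)) := by
    ext z; simp [sub_lt_sub_iff_left]
  have h2 : MeasurableEmbedding (fun z : ℝ => y - z) :=
    (MeasurableEquiv.subLeft y).measurableEmbedding
  have := ((Measure.measurePreserving_sub_left volume y).integrableOn_comp_preimage
    (e := fun z : ℝ => y - z) (f := fun u : ℝ => u ^ (-(1 + α))) h2 (s := Ioi (y - a))).mpr base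
  rw [hpre]
  exact this

lemma intOn_Ioi {α : ℝ} (hα : 0 < α) {y b : ℝ} (h : y < b) :
    IntegrableOn (fun z : ℝ => (z - y) ^ (-(1 + α))) (Ioi b) := by
  have base : IntegrableOn (fun u : ℝ => u ^ (-(1 + α))) (Ioi (b - y)) :=
    integrableOn_Ioi_rpow_of_lt (by linarith) (by linarith)
  have hpre : Ioi b = (fun z : ℝ => z - y) ⁻¹' (Ioi (b - y)) := by
    ext z; simp [sub_lt_sub_iff_right]
  have h2 : MeasurableEmbedding (fun z : ℝ => z - y) :=
    (MeasurableEquiv.subRight y).measurableEmbedding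
  have := ((measurePreserving_sub_right volume y).integrableOn_comp_preimage
    (e := fun z : ℝ => z - y) (f := fun u : ℝ => u ^ (-(1 + α))) h2 (s := Ioi (b - y))).mpr base
  rw [hpre]
  exact this

lemma pointwise_int {α : ℝ} (hα : 0 < α) {a b y : ℝ} (hab : a < b)
    (hya : y ≠ a) (hyb : y ≠ b) :
    ∫ z : ℝ, (z - y) * ((Ioo a b).indicator 1 z - (Ioo a b).indicator 1 y) / |z - y| ^ (2 + α)
      = (|y - a| ^ (-α) - |y - b| ^ (-α)) / α := by
  rcases lt_trichotomy y a with hy | hy | hy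
  · -- y < a
    have hfy : (Ioo a b).indicator (1 : ℝ → ℝ) y = 0 :=
      indicator_of_notMem (by simp only [mem_Ioo, not_and, not_lt]; intro h; linarith) _
    have hrw : (fun z : ℝ => (z - y) * ((Ioo a b).indicator 1 z - (Ioo a b).indicator 1 y)
        / |z - y| ^ (2 + α))
        = (Ioo a b).indicator (fun z => (z - y) / |z - y| ^ (2 + α)) := by
      funext z
      by_cases hz : z ∈ Ioo a b
      · rw [indicator_of_mem hz, indicator_of_mem hz, hfy]
        simp
      · rw [indicator_of_notMem hz, indicator_of_notMem hz, hfy]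
        simp
    rw [hrw, integral_indicator measurableSet_Ioo,
      setIntegral_congr_fun measurableSet_Ioo
        (g := fun z => (fun u : ℝ => u ^ (-(1 + α))) (z - y))
        (by intro z hz; exact div_abs_rpow hα (by simp only [mem_Ioo] at hz; linarith)),
      sub_Ioo (fun u : ℝ => u ^ (-(1 + α))) y a b, key_Ioo hα (by linarith) (by linarith),
      abs_of_neg (by linarith : y - a < 0), abs_of_neg (by linarith : y - b < 0),
      neg_sub, neg_sub]
  · exact absurd hy hya
  · rcases lt_trichotomy y b with hy2 | hy2 | hy2
    · -- a < y < b
      have hfy : (Ioo a b).indicator (1 : ℝ → ℝ) y = 1 :=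
        indicator_of_mem (by exact ⟨hy, hy2⟩) _
      have hae : (fun z : ℝ => (z - y) * ((Ioo a b).indicator 1 z - (Ioo a b).indicator 1 y)
          / |z - y| ^ (2 + α))
          =ᵐ[volume] (fun z => (Iio a).indicator (fun z => (y - z) ^ (-(1 + α))) z
            + (Ioi b).indicator (fun z => -((z - y) ^ (-(1 + α)))) z) := by
        have hcnt : ∀ᵐ z : ℝ, z ∉ ({a, b} : Set ℝ) :=
          (Set.Countable.ae_notMem (by simp) _)
        filter_upwards [hcnt] with z hz
        simp only [mem_insert_iff, mem_singleton_iff, not_or] at hz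
        rw [hfy]
        rcases lt_trichotomy z a with h1 | h1 | h1
        · rw [indicator_of_notMem (fun hm => absurd hm.1 (by linarith)),
            indicator_of_mem (show z ∈ Iio a from h1),
            indicator_of_notMem (show z ∉ Ioi b by simp only [mem_Ioi, not_lt]; linarith),
            add_zero]
          have h3 : (0:ℝ) < y - z := by linarith
          have hd := div_abs_rpow hα h3
          rw [abs_of_pos h3] at hd
          calc (z - y) * (0 - 1) / |z - y| ^ (2 + α)
              = (y - z) / |y - z| ^ (2 + α) := by
                rw [show |z - y| = |y - z| from abs_sub_comm z y]; ring
            _ = (y - z) ^ (-(1 + α)) := by rw [abs_of_pos h3]; exact hd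
        · exact absurd h1 hz.1
        · rcases lt_trichotomy z b with h2 | h2 | h2
          · rw [indicator_of_mem (show z ∈ Ioo a b from ⟨h1, h2⟩),
              indicator_of_notMem (show z ∉ Iio a by simp only [mem_Iio, not_lt]; linarith),
              indicator_of_notMem (show z ∉ Ioi b by simp only [mem_Ioi, not_lt]; linarith)]
            simp
          · exact absurd h2 hz.2
          · rw [indicator_of_notMem (fun hm => absurd hm.2 (by linarith)),
              indicator_of_notMem (show z ∉ Iio a by simp only [mem_Iio, not_lt]; linarith),
              indicator_of_mem (show z ∈ Ioi b from h2), zero_add]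
            have h3 : (0:ℝ) < z - y := by linarith
            have hd := div_abs_rpow hα h3
            rw [abs_of_pos h3] at hd
            calc (z - y) * (0 - 1) / |z - y| ^ (2 + α)
                = -((z - y) / |z - y| ^ (2 + α)) := by ring
              _ = -((z - y) ^ (-(1 + α))) := by rw [abs_of_pos h3, hd]
      have hi1 : Integrable ((Iio a).indicator (fun z : ℝ => (y - z) ^ (-(1 + α)))) :=
        (integrable_indicator_iff measurableSet_Iio).mpr (intOn_Iio hα hy)
      have hi2 : Integrable ((Ioi b).indicator (fun z : ℝ => -((z - y) ^ (-(1 + α))))) :=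
        (integrable_indicator_iff measurableSet_Ioi).mpr (by exact (intOn_Ioi hα hy2).neg)
      rw [integral_congr_ae hae, integral_add hi1 hi2,
        integral_indicator measurableSet_Iio, integral_indicator measurableSet_Ioi,
        sub_Iio (fun u => u ^ (-(1 + α))) y a, key_Ioi hα (by linarith),
        integral_neg, sub_Ioi (fun u => u ^ (-(1 + α))) y b, key_Ioi hα (by linarith),
        abs_of_pos (by linarith : (0:ℝ) < y - a), abs_of_neg (by linarith : y - b < 0), neg_sub]
      ring
    · exact absurd hy2 hyb
    · -- b < y
      have hfy : (Ioo a b).indicator (1 : ℝ → ℝ) y = 0 :=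
        indicator_of_notMem (by simp only [mem_Ioo, not_and, not_lt]; intro; linarith) _
      have hrw : (fun z : ℝ => (z - y) * ((Ioo a b).indicator 1 z - (Ioo a b).indicator 1 y)
          / |z - y| ^ (2 + α))
          = (Ioo a b).indicator (fun z => (z - y) / |z - y| ^ (2 + α)) := by
        funext z
        by_cases hz : z ∈ Ioo a b
        · rw [indicator_of_mem hz, indicator_of_mem hz, hfy]; simp
        · rw [indicator_of_notMem hz, indicator_of_notMem hz, hfy]; simp
      rw [hrw, integral_indicator measurableSet_Ioo,
        setIntegral_congr_fun measurableSet_Ioo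
          (g := fun z => -((fun u : ℝ => u ^ (-(1 + α))) (y - z)))
          (by
            intro z hz
            simp only [mem_Ioo] at hz
            have h3 : (0:ℝ) < y - z := by linarith
            have := div_abs_rpow hα h3
            rw [abs_of_pos h3] at this
            have h4 : |z - y| = y - z := by rw [abs_of_neg (by linarith : z - y < 0)]; ring
            calc (z - y) / |z - y| ^ (2 + α) = -((y - z) / (y - z) ^ (2 + α)) := by
                  rw [h4]; ring
              _ = -((y - z) ^ (-(1 + α))) := by rw [this]),
        integral_neg, sub_Ioo' (fun u : ℝ => u ^ (-(1 + α))) y a b, key_Ioo hα (by linarith) (by linarith),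
        abs_of_pos (by linarith : (0:ℝ) < y - a), abs_of_pos (by linarith : (0:ℝ) < y - b)]
      ring

lemma mu1_pos {α : ℝ} (hα : α ∈ Set.Ioo (0:ℝ) 1) : 0 < mu1 α := by
  unfold mu1
  have h1 : 0 < Real.Gamma ((2 + α) / 2) := Real.Gamma_pos_of_pos (by linarith [hα.1])
  have h2 : 0 < Real.Gamma ((1 - α) / 2) := Real.Gamma_pos_of_pos (by linarith [hα.2])
  have h3 : (0:ℝ) < 2 ^ α := Real.rpow_pos_of_pos two_pos α
  have h4 : (0:ℝ) < Real.pi ^ (-(1:ℝ)/2) := Real.rpow_pos_of_pos Real.pi_pos _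
  positivity

lemma part1 {α : ℝ} (hα : α ∈ Set.Ioo (0:ℝ) 1) (x r : ℝ) (hr : 0 < r) :
    ∀ᵐ y : ℝ, fracGrad1 α ((Set.Ioo (x - r) (x + r)).indicator 1) y
        = mu1 α / α * (|y - x + r| ^ (-α) - |y - x - r| ^ (-α)) := by
  have hcnt : ∀ᵐ y : ℝ, y ∉ ({x - r, x + r} : Set ℝ) :=
    Set.Countable.ae_notMem (by simp) _
  filter_upwards [hcnt] with y hy
  simp only [mem_insert_iff, mem_singleton_iff, not_or] at hy
  unfold fracGrad1
  rw [pointwise_int hα.1 (by linarith) hy.1 hy.2,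
    show y - (x - r) = y - x + r by ring, show y - (x + r) = y - x - r by ring]
  ring

lemma part2 {α : ℝ} (hα : α ∈ Set.Ioo (0:ℝ) 1) (x r : ℝ) (hr : 0 < r) :
    ∃ M : ℝ, ∀ t : ℝ, 0 < t →
      t * (volume {y : ℝ |
        t < |fracGrad1 α ((Set.Ioo (x - r) (x + r)).indicator 1) y|}).toReal ^ α ≤ M := by
  set C := mu1 α / α with hCdef
  have hC : 0 < C := div_pos (mu1_pos hα) hα.1
  set F := fracGrad1 α ((Set.Ioo (x - r) (x + r)).indicator 1) with hFdef
  set g : ℝ → ℝ := fun y => C * (|y - x + r| ^ (-α) - |y - x - r| ^ (-α)) with hgdef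
  have hFg : ∀ᵐ y : ℝ, F y = g y := part1 hα x r hr
  have hveq : ∀ t : ℝ, volume {y : ℝ | t < |F y|} = volume {y : ℝ | t < |g y|} := by
    intro t
    apply measure_congr
    rw [eventuallyEq_set]
    filter_upwards [hFg] with y hy
    simp only [mem_setOf_eq, hy]
  refine ⟨4 ^ α * (2 * C), fun t ht => ?_⟩
  set s := (2 * C / t) ^ (1 / α) with hsdef
  have hs : 0 < s := Real.rpow_pos_of_pos (by positivity) _
  have hsa : s ^ (-α) = t / (2 * C) := by
    rw [hsdef, ← Real.rpow_mul (by positivity),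
      show 1 / α * -α = -1 by rw [mul_neg, one_div, inv_mul_cancel₀ hα.1.ne'], Real.rpow_neg_one, inv_div]
  have hsub : {y : ℝ | t < |g y|} ⊆ Metric.ball (x - r) s ∪ Metric.ball (x + r) s := by
    intro y hy
    rw [mem_setOf_eq] at hy
    set p := |y - x + r| ^ (-α) with hp
    set q := |y - x - r| ^ (-α) with hq
    have hp0 : 0 ≤ p := Real.rpow_nonneg (abs_nonneg _) _
    have hq0 : 0 ≤ q := Real.rpow_nonneg (abs_nonneg _) _
    have habs : |g y| ≤ C * (p + q) := by
      rw [hgdef]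
      simp only
      rw [abs_mul, abs_of_pos hC]
      exact mul_le_mul_of_nonneg_left
        ((abs_sub p q).trans_eq (by rw [abs_of_nonneg hp0, abs_of_nonneg hq0])) hC.le
    have key : ∀ w : ℝ, t / 2 < C * |w| ^ (-α) → |w| < s := by
      intro w hw
      by_contra hcon
      push_neg at hcon
      have h1 : |w| ^ (-α) ≤ s ^ (-α) :=
        Real.rpow_le_rpow_of_nonpos hs hcon (by linarith [hα.1])
      rw [hsa] at h1
      have h2 : C * |w| ^ (-α) ≤ C * (t / (2 * C)) := mul_le_mul_of_nonneg_left h1 hC.le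
      have h3 : C * (t / (2 * C)) = t / 2 := by
        field_simp
      rw [h3] at h2
      linarith
    have hcases : t / 2 < C * p ∨ t / 2 < C * q := by
      by_contra hcon
      push_neg at hcon
      have := habs
      have h0 : 0 ≤ |g y| := abs_nonneg _
      nlinarith [hcon.1, hcon.2]
    rcases hcases with h | h
    · left
      rw [Metric.mem_ball, Real.dist_eq, show y - (x - r) = y - x + r by ring]
      exact key _ h
    · right
      rw [Metric.mem_ball, Real.dist_eq, show y - (x + r) = y - x - r by ring]
      exact key _ h
  have hvol : volume {y : ℝ | t < |F y|} ≤ ENNReal.ofReal (4 * s) := by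
    rw [hveq t]
    refine (measure_mono hsub).trans ((measure_union_le _ _).trans ?_)
    rw [Real.volume_ball, Real.volume_ball, ← ENNReal.ofReal_add (by positivity) (by positivity)]
    exact ENNReal.ofReal_le_ofReal (by linarith)
  have htr : (volume {y : ℝ | t < |F y|}).toReal ≤ 4 * s :=
    ENNReal.toReal_le_of_le_ofReal (by positivity) hvol
  have hsα : s ^ α = 2 * C / t := by
    rw [hsdef, ← Real.rpow_mul (by positivity), one_div, inv_mul_cancel₀ hα.1.ne',
      Real.rpow_one]
  calc t * (volume {y : ℝ | t < |F y|}).toReal ^ α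
      ≤ t * (4 * s) ^ α := by
        exact mul_le_mul_of_nonneg_left
          (Real.rpow_le_rpow ENNReal.toReal_nonneg htr hα.1.le) ht.le
    _ = t * (4 ^ α * (2 * C / t)) := by
        rw [Real.mul_rpow (by norm_num) hs.le, hsα]
    _ = 4 ^ α * (2 * C) := by field_simp

lemma lint_inv_top {t₀ : ℝ} (ht₀ : 0 < t₀) :
    ∫⁻ t in Set.Ioi t₀, (ENNReal.ofReal t)⁻¹ = ⊤ := by
  by_contra hcon
  have hlt : ∫⁻ t in Set.Ioi t₀, (ENNReal.ofReal t)⁻¹ < ⊤ := lt_top_iff_ne_top.mpr hcon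
  have heq : ∫⁻ t in Set.Ioi t₀, (ENNReal.ofReal t)⁻¹
      = ∫⁻ t in Set.Ioi t₀, ‖(fun u : ℝ => u ^ (-1 : ℝ)) t‖ₑ := by
    refine lintegral_congr_ae ((ae_restrict_iff' measurableSet_Ioi).mpr (ae_of_all _ ?_))
    intro t htt
    rw [mem_Ioi] at htt
    have ht : 0 < t := lt_trans ht₀ htt
    dsimp only
    rw [← ofReal_norm_eq_enorm, Real.norm_eq_abs, Real.rpow_neg_one,
      abs_of_pos (by positivity), ENNReal.ofReal_inv_of_pos ht]
  have hint : IntegrableOn (fun u : ℝ => u ^ (-1 : ℝ)) (Set.Ioi t₀) := by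
    constructor
    · exact (Measurable.aestronglyMeasurable (by fun_prop)).restrict
    · rw [HasFiniteIntegral, ← heq]
      exact hlt
  rw [integrableOn_Ioi_rpow_iff ht₀] at hint
  linarith

lemma part3 {α : ℝ} (hα : α ∈ Set.Ioo (0:ℝ) 1) (x r : ℝ) (hr : 0 < r) :
    ∀ s : ℝ, 1 ≤ s →
      (∫⁻ t in Set.Ioi (0 : ℝ),
        (ENNReal.ofReal t *
          (volume {y : ℝ |
            t < |fracGrad1 α ((Set.Ioo (x - r) (x + r)).indicator 1) y|}) ^ α) ^ s
          / ENNReal.ofReal t) = ⊤ := by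
  intro s hs
  set C := mu1 α / α with hCdef
  have hC : 0 < C := div_pos (mu1_pos hα) hα.1
  set F := fracGrad1 α ((Set.Ioo (x - r) (x + r)).indicator 1) with hFdef
  set g : ℝ → ℝ := fun y => C * (|y - x + r| ^ (-α) - |y - x - r| ^ (-α)) with hgdef
  have hFg : ∀ᵐ y : ℝ, F y = g y := part1 hα x r hr
  have hveq : ∀ t : ℝ, volume {y : ℝ | t < |F y|} = volume {y : ℝ | t < |g y|} := by
    intro t
    apply measure_congr
    rw [eventuallyEq_set]
    filter_upwards [hFg] with y hy
    simp only [mem_setOf_eq, hy]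
  set δ₀ : ℝ := 2 * r * 2 ^ (-(1/α)) with hδ₀def
  have hδ₀ : 0 < δ₀ := by
    have := Real.rpow_pos_of_pos (two_pos (α := ℝ)) (-(1/α))
    positivity
  have hδ₀α : δ₀ ^ (-α) = 2 * (2 * r) ^ (-α) := by
    rw [hδ₀def, Real.mul_rpow (by positivity) (Real.rpow_pos_of_pos two_pos _).le,
      ← Real.rpow_mul (by norm_num : (0:ℝ) ≤ 2),
      show -(1/α) * -α = 1 by rw [neg_mul_neg, one_div, inv_mul_cancel₀ hα.1.ne'],
      Real.rpow_one]
    ring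
  set t₀ : ℝ := max 1 (C / (2 * δ₀ ^ α)) with ht₀def
  have ht₀ : 0 < t₀ := lt_of_lt_of_le one_pos (le_max_left _ _)
  -- key lower bound
  have key : ∀ t : ℝ, t₀ ≤ t →
      ENNReal.ofReal (C / 2) ≤ ENNReal.ofReal t * (volume {y : ℝ | t < |F y|}) ^ α := by
    intro t ht
    have ht1 : (1:ℝ) ≤ t := le_trans (le_max_left _ _) ht
    have htpos : (0:ℝ) < t := lt_of_lt_of_le one_pos ht1
    set δt : ℝ := (C / (2 * t)) ^ (1/α) with hδtdef
    have hδt : 0 < δt := Real.rpow_pos_of_pos (by positivity) _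
    have hδtα : δt ^ α = C / (2 * t) := by
      rw [hδtdef, ← Real.rpow_mul (by positivity), one_div, inv_mul_cancel₀ hα.1.ne',
        Real.rpow_one]
    have hδtnegα : δt ^ (-α) = 2 * t / C := by
      rw [hδtdef, ← Real.rpow_mul (by positivity),
        show 1 / α * -α = -1 by rw [mul_neg, one_div, inv_mul_cancel₀ hα.1.ne'],
        Real.rpow_neg_one, inv_div]
    have hδtδ₀ : δt ≤ δ₀ := by
      by_contra hcon
      push_neg at hcon
      have h1 : δ₀ ^ α < δt ^ α := Real.rpow_lt_rpow hδ₀.le hcon hα.1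
      rw [hδtα] at h1
      have h2 : C / (2 * δ₀ ^ α) ≤ t := le_trans (le_max_right _ _) ht
      have h3 : 0 < δ₀ ^ α := Real.rpow_pos_of_pos hδ₀ _
      rw [div_le_iff₀ (by positivity)] at h2
      rw [lt_div_iff₀ (by positivity)] at h1
      nlinarith
    have hsub : Ioo (x - r - δt) (x - r) ⊆ {y : ℝ | t < |g y|} := by
      intro y hy
      rw [mem_Ioo] at hy
      rw [mem_setOf_eq]
      set u : ℝ := x - r - y with hudef
      have hu : 0 < u := by simp only [hudef]; linarith
      have hu2 : u < δt := by simp only [hudef]; linarith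
      have habs1 : |y - x + r| = u := by
        rw [show y - x + r = -u by simp only [hudef]; ring, abs_neg, abs_of_pos hu]
      have habs2 : |y - x - r| = 2 * r + u := by
        rw [show y - x - r = -(2 * r + u) by simp only [hudef]; ring, abs_neg,
          abs_of_pos (by positivity)]
      have h1 : (2 * r + u) ^ (-α) ≤ (2 * r) ^ (-α) :=
        Real.rpow_le_rpow_of_nonpos (by positivity) (by linarith) (by linarith [hα.1])
      have h2 : δ₀ ^ (-α) ≤ u ^ (-α) :=
        Real.rpow_le_rpow_of_nonpos hu (le_trans hu2.le hδtδ₀) (by linarith [hα.1])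
      have h3 : δt ^ (-α) < u ^ (-α) :=
        Real.rpow_lt_rpow_of_neg hu hu2 (by linarith [hα.1])
      rw [hδ₀α] at h2
      have hg : g y = C * (u ^ (-α) - (2 * r + u) ^ (-α)) := by
        rw [hgdef]; simp only; rw [habs1, habs2]
      have hglow : t < g y := by
        rw [hg, hδtnegα] at *
        have hCu : 0 < u ^ (-α) := Real.rpow_pos_of_pos hu _
        have : 2 * t / C < u ^ (-α) := h3
        have hfin : C * (u ^ (-α) - (2 * r + u) ^ (-α)) ≥ C * (u ^ (-α) / 2) := by
          apply mul_le_mul_of_nonneg_left _ hC.le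
          linarith
        have : C * (u ^ (-α) / 2) > C * ((2 * t / C) / 2) := by
          apply mul_lt_mul_of_pos_left _ hC
          linarith
        have hsimp : C * ((2 * t / C) / 2) = t := by field_simp
        linarith
      exact lt_of_lt_of_le hglow (le_abs_self _)
    have hvol : ENNReal.ofReal δt ≤ volume {y : ℝ | t < |F y|} := by
      rw [hveq t]
      refine le_trans (le_of_eq ?_) (measure_mono hsub)
      rw [Real.volume_Ioo, show x - r - (x - r - δt) = δt by ring]
    calc ENNReal.ofReal (C / 2)
        = ENNReal.ofReal t * ENNReal.ofReal (δt ^ α) := by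
          rw [← ENNReal.ofReal_mul htpos.le, hδtα,
            show t * (C / (2 * t)) = C / 2 by field_simp]
      _ = ENNReal.ofReal t * (ENNReal.ofReal δt) ^ α := by
          rw [ENNReal.ofReal_rpow_of_pos hδt]
      _ ≤ ENNReal.ofReal t * (volume {y : ℝ | t < |F y|}) ^ α :=
          mul_le_mul_right (ENNReal.rpow_le_rpow hvol hα.1.le) _
  -- conclude divergence
  set k : ℝ≥0∞ := ENNReal.ofReal ((C / 2) ^ s) with hkdef
  have hk0 : k ≠ 0 := by
    rw [hkdef]
    simp only [ne_eq, ENNReal.ofReal_eq_zero, not_le]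
    positivity
  rw [eq_top_iff]
  calc (⊤ : ℝ≥0∞) = k * ∫⁻ t in Set.Ioi t₀, (ENNReal.ofReal t)⁻¹ := by
        rw [lint_inv_top ht₀, ENNReal.mul_top hk0]
    _ = ∫⁻ t in Set.Ioi t₀, k * (ENNReal.ofReal t)⁻¹ :=
        (lintegral_const_mul' k _ ENNReal.ofReal_ne_top).symm
    _ ≤ ∫⁻ t in Set.Ioi t₀,
          (ENNReal.ofReal t * (volume {y : ℝ | t < |F y|}) ^ α) ^ s / ENNReal.ofReal t := by
        refine lintegral_mono_ae ((ae_restrict_iff' measurableSet_Ioi).mpr (ae_of_all _ ?_))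
        intro t htt
        rw [mem_Ioi] at htt
        have h1 : k ≤ (ENNReal.ofReal t * (volume {y : ℝ | t < |F y|}) ^ α) ^ s := by
          rw [hkdef, ← ENNReal.ofReal_rpow_of_pos (by positivity)]
          exact ENNReal.rpow_le_rpow (key t htt.le) (by linarith)
        rw [div_eq_mul_inv]
        exact mul_le_mul_left h1 _
    _ ≤ ∫⁻ t in Set.Ioi (0:ℝ),
          (ENNReal.ofReal t * (volume {y : ℝ | t < |F y|}) ^ α) ^ s / ENNReal.ofReal t :=
        lintegral_mono_set (Ioi_subset_Ioi ht₀.le)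

theorem stmt5 (α : ℝ) (hα : α ∈ Set.Ioo (0 : ℝ) 1) (x r : ℝ) (hr : 0 < r) :
    (∀ᵐ y : ℝ, fracGrad1 α ((Set.Ioo (x - r) (x + r)).indicator 1) y
        = mu1 α / α * (|y - x + r| ^ (-α) - |y - x - r| ^ (-α)))
    ∧ (∃ M : ℝ, ∀ t : ℝ, 0 < t →
        t * (volume {y : ℝ |
          t < |fracGrad1 α ((Set.Ioo (x - r) (x + r)).indicator 1) y|}).toReal ^ α ≤ M)
    ∧ (∀ s : ℝ, 1 ≤ s →
        (∫⁻ t in Set.Ioi (0 : ℝ),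
          (ENNReal.ofReal t *
            (volume {y : ℝ |
              t < |fracGrad1 α ((Set.Ioo (x - r) (x + r)).indicator 1) y|}) ^ α) ^ s
            / ENNReal.ofReal t) = ⊤) := by
  exact ⟨part1 hα x r hr, part2 hα x r hr, part3 hα x r hr⟩
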